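/- Let H be a graph on vertex set A ⊆ V(T) for a tree T, such that d_T(a,b) ≤ r·d_H(a,b) for all a,b ∈ A, and let c be a weight function on V(T) supported on A with restriction c' to A. Then SW_k(T,c) ≤ r·SW_k(H,c'). -/

import Mathlib

open scoped Classical
open Finset

noncomputable def steinerDist {V : Type*} (G : SimpleGraph V) (S : Finset V) : ℕ :=
  sInf {m : ℕ | ∃ H : G.Subgraph, H.Connected ∧ ↑S ⊆ H.verts ∧ H.edgeSet.ncard = m}

noncomputable def swk {V : Type*} [Fintype V] (k : ℕ) (G : SimpleGraph V) : ℕ :=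
  ∑ S ∈ Finset.powersetCard k (Finset.univ : Finset V), steinerDist G S

noncomputable def wswk {V : Type*} [Fintype V] (k : ℕ) (G : SimpleGraph V) (c : V → ℕ) : ℕ :=
  ∑ S ∈ Finset.powersetCard k (Finset.univ : Finset (Σ v : V, Fin (c v))), steinerDist G (S.image Sigma.fst)

lemma steiner_key {V : Type*} [Fintype V]
    (T : SimpleGraph V) (hTc : T.Connected) (A : Finset V) (H : SimpleGraph ↥A)
    (hH : H.Connected) (r : ℕ)
    (hd : ∀ x y : ↥A, T.dist ↑x ↑y ≤ r * H.dist x y)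
    (B : Finset ↥A) :
    steinerDist T (B.image Subtype.val) ≤ r * steinerDist H B := by
  unfold steinerDist
  classical
  set n := sInf {m : ℕ | ∃ K : H.Subgraph, K.Connected ∧ ↑B ⊆ K.verts ∧ K.edgeSet.ncard = m} with hn
  have htop : (⊤ : H.Subgraph).Connected := ⟨SimpleGraph.Subgraph.topIso.connected_iff.mpr hH⟩
  have hne : {m : ℕ | ∃ K : H.Subgraph, K.Connected ∧ ↑B ⊆ K.verts ∧ K.edgeSet.ncard = m}.Nonempty :=
    ⟨(⊤ : H.Subgraph).edgeSet.ncard, ⊤, htop, by simp [SimpleGraph.Subgraph.verts_top], rfl⟩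
  obtain ⟨K, hKc, hKB, hKn⟩ := Nat.sInf_mem hne
  obtain ⟨a₀, ha₀⟩ := hKc.nonempty
  -- choose walks of minimal length in T
  choose w hw using fun (a b : ↥A) => hTc.exists_walk_length_eq_dist (a : V) (b : V)
  set g : Sym2 ↥A → T.Subgraph := fun e => (w (Quot.out e).1 (Quot.out e).2).toSubgraph with hg
  set E : Finset (Sym2 ↥A) := (Set.toFinite K.edgeSet).toFinset with hE
  have hmemE : ∀ e, e ∈ E ↔ e ∈ K.edgeSet := fun e => Set.Finite.mem_toFinset _
  set L : T.Subgraph := E.sup g ⊔ T.singletonSubgraph (a₀ : V) with hL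
  have ha₀L : (a₀ : V) ∈ L.verts := by
    rw [hL, SimpleGraph.Subgraph.verts_sup]
    exact Or.inr (by simp [SimpleGraph.singletonSubgraph])
  -- generic reachability transfer
  have reach : ∀ (x y : V) (hx : x ∈ L.verts) (hy : y ∈ L.verts) (W : T.Subgraph),
      W ≤ L → W.Connected → x ∈ W.verts → y ∈ W.verts →
      L.coe.Reachable ⟨x, hx⟩ ⟨y, hy⟩ := by
    intro x y hx hy W hle hWc hxW hyW
    exact SimpleGraph.Reachable.map (SimpleGraph.Subgraph.inclusion hle)
      (hWc.coe ⟨x, hxW⟩ ⟨y, hyW⟩)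
  -- properties of g on E
  have hgE : ∀ e ∈ E, g e ≤ L ∧ (g e).Connected ∧
      (∀ a b : ↥A, e = s(a,b) → (a : V) ∈ (g e).verts ∧ (b : V) ∈ (g e).verts) ∧
      (g e).edgeSet.ncard ≤ r := by
    intro e heE
    have hle : g e ≤ L := le_trans (Finset.le_sup heE) le_sup_left
    have hout : s((Quot.out e).1, (Quot.out e).2) = e := Quot.out_eq e
    have hadj : K.Adj (Quot.out e).1 (Quot.out e).2 := by
      rw [← SimpleGraph.Subgraph.mem_edgeSet, hout]
      exact (hmemE e).mp heE
    refine ⟨hle, (w _ _).toSubgraph_connected, ?_, ?_⟩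
    · intro a b hab
      have h2 : s((Quot.out e).1, (Quot.out e).2) = s(a,b) := by rw [hout, hab]
      rw [Sym2.eq_iff] at h2
      rcases h2 with ⟨h1, h2⟩ | ⟨h1, h2⟩
      · exact ⟨h1 ▸ (w _ _).start_mem_verts_toSubgraph, h2 ▸ (w _ _).end_mem_verts_toSubgraph⟩
      · exact ⟨h2 ▸ (w _ _).end_mem_verts_toSubgraph, h1 ▸ (w _ _).start_mem_verts_toSubgraph⟩
    · have h1 : (g e).edgeSet = ↑((w (Quot.out e).1 (Quot.out e).2).edges.toFinset) := by
        rw [hg]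
        rw [SimpleGraph.Walk.edgeSet_toSubgraph]
        ext x; simp
      rw [h1, Set.ncard_coe_finset]
      calc ((w (Quot.out e).1 (Quot.out e).2).edges.toFinset).card
          ≤ (w (Quot.out e).1 (Quot.out e).2).edges.length := List.toFinset_card_le _
        _ = (w (Quot.out e).1 (Quot.out e).2).length := SimpleGraph.Walk.length_edges _
        _ = T.dist ((Quot.out e).1 : V) ((Quot.out e).2 : V) := hw _ _
        _ ≤ r * H.dist (Quot.out e).1 (Quot.out e).2 := hd _ _
        _ ≤ r * 1 := by
            have h5 : H.dist (Quot.out e).1 (Quot.out e).2 = 1 :=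
              SimpleGraph.dist_eq_one_iff_adj.mpr (K.adj_sub hadj)
            rw [h5]
        _ = r := mul_one r
  -- adjacency in K gives reachability in L
  have adjstep : ∀ a b : ↥A, K.Adj a b → ∃ (ha : (a:V) ∈ L.verts) (hb : (b:V) ∈ L.verts),
      L.coe.Reachable ⟨(a:V), ha⟩ ⟨(b:V), hb⟩ := by
    intro a b hab
    have heE : s(a,b) ∈ E := (hmemE _).mpr ((SimpleGraph.Subgraph.mem_edgeSet).mpr hab)
    obtain ⟨hle, hc, hverts, -⟩ := hgE _ heE
    obtain ⟨haW, hbW⟩ := hverts a b rfl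
    have ha : (a:V) ∈ L.verts := hle.1 haW
    have hb : (b:V) ∈ L.verts := hle.1 hbW
    exact ⟨ha, hb, reach _ _ ha hb _ hle hc haW hbW⟩
  -- walk induction in K
  have walkreach : ∀ (x y : K.verts) (p : K.coe.Walk x y) (hy : (y : V) ∈ L.verts),
      ∃ hx : (x : V) ∈ L.verts, L.coe.Reachable ⟨(x : V), hx⟩ ⟨(y : V), hy⟩ := by
    intro x y p
    induction p with
    | nil => intro hy; exact ⟨hy, SimpleGraph.Reachable.refl _⟩
    | cons h p ih =>
      intro hy
      obtain ⟨hm, hr⟩ := ih hy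
      have hadj : K.Adj _ _ := h
      obtain ⟨ha, hb, hr2⟩ := adjstep _ _ hadj
      exact ⟨ha, hr2.trans hr⟩
  have vertreach : ∀ x : ↥A, x ∈ K.verts → ∃ hx : (x:V) ∈ L.verts,
      L.coe.Reachable ⟨(x:V), hx⟩ ⟨(a₀:V), ha₀L⟩ := by
    intro x hx
    obtain ⟨p⟩ := hKc.coe ⟨x, hx⟩ ⟨a₀, ha₀⟩
    exact walkreach _ _ p ha₀L
  -- verts of finset sup
  have vertsup : ∀ F : Finset (Sym2 ↥A), (F.sup g).verts ⊆ ⋃ e ∈ F, (g e).verts := by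
    intro F
    induction F using Finset.induction with
    | empty => simp [SimpleGraph.Subgraph.verts_bot]
    | @insert _ _ hni ih =>
      rw [Finset.sup_insert, SimpleGraph.Subgraph.verts_sup]
      rintro v (hv | hv)
      · exact Set.mem_biUnion (Finset.mem_insert_self _ _) hv
      · obtain ⟨s, hs⟩ := Set.mem_iUnion.mp (ih hv)
        simp only [Set.mem_iUnion] at hs ⊢
        obtain ⟨hsF, hvs⟩ := hs
        exact ⟨s, Finset.mem_insert_of_mem hsF, hvs⟩
  -- L is connected
  have hLconn : L.Connected := by
    refine ⟨(SimpleGraph.connected_iff_exists_forall_reachable (G := L.coe)).mpr ⟨⟨(a₀:V), ha₀L⟩, ?_⟩⟩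
    rintro ⟨v, hv⟩
    rw [hL, SimpleGraph.Subgraph.verts_sup] at hv
    rcases hv with hv | hv
    · obtain ⟨s, hs⟩ := Set.mem_iUnion.mp (vertsup E hv)
      simp only [Set.mem_iUnion] at hs
      obtain ⟨hsE, hvs⟩ := hs
      obtain ⟨hle, hc, hverts, -⟩ := hgE s hsE
      have hadj : K.Adj (Quot.out s).1 (Quot.out s).2 := by
        have hout : s((Quot.out s).1, (Quot.out s).2) = s := Quot.out_eq s
        rw [← SimpleGraph.Subgraph.mem_edgeSet, hout]
        exact (hmemE s).mp hsE
      obtain ⟨haW, -⟩ := hverts (Quot.out s).1 (Quot.out s).2 (Quot.out_eq s).symm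
      have ha : ((Quot.out s).1 : V) ∈ L.verts := hle.1 haW
      have hvL : v ∈ L.verts := hle.1 hvs
      have h1 : L.coe.Reachable ⟨(a₀:V), ha₀L⟩ ⟨v, hvL⟩ := by
        obtain ⟨hx, hr⟩ := vertreach _ (K.edge_vert hadj)
        exact (hr.symm).trans ((reach _ _ hx hvL _ hle hc haW hvs))
      exact h1
    · have hv' : v = (a₀ : V) := by
        simpa [SimpleGraph.singletonSubgraph] using hv
      subst hv'
      exact SimpleGraph.Reachable.refl _
  -- B is contained in L
  have hBL : ↑(B.image Subtype.val) ⊆ L.verts := by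
    intro v hv
    rw [Finset.mem_coe, Finset.mem_image] at hv
    obtain ⟨b, hb, rfl⟩ := hv
    obtain ⟨hx, -⟩ := vertreach b (hKB hb)
    exact hx
  -- edge count
  have hcard : ∀ F : Finset (Sym2 ↥A), F ⊆ E → (F.sup g).edgeSet.ncard ≤ r * F.card := by
    intro F
    induction F using Finset.induction with
    | empty => intro _; simp [SimpleGraph.Subgraph.edgeSet_bot]
    | @insert a F hni ih =>
      intro hsub
      rw [Finset.sup_insert, SimpleGraph.Subgraph.edgeSet_sup]
      have h1 := Set.ncard_union_le (g a).edgeSet (F.sup g).edgeSet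
      have h2 := ih (fun x hx => hsub (Finset.mem_insert_of_mem hx))
      have h3 := (hgE a (hsub (Finset.mem_insert_self _ _))).2.2.2
      rw [Finset.card_insert_of_notMem hni]
      calc ((g a).edgeSet ∪ (F.sup g).edgeSet).ncard
          ≤ (g a).edgeSet.ncard + (F.sup g).edgeSet.ncard := h1
        _ ≤ r + r * F.card := add_le_add h3 h2
        _ = r * (F.card + 1) := by ring
  have hLedge : L.edgeSet.ncard ≤ r * n := by
    have hEcard : E.card = n := by
      rw [hE, hn, ← hKn]
      exact (Set.ncard_eq_toFinset_card _ _).symm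
    have : L.edgeSet = (E.sup g).edgeSet := by
      rw [hL, SimpleGraph.Subgraph.edgeSet_sup, SimpleGraph.edgeSet_singletonSubgraph]
      simp
    rw [this]
    calc (E.sup g).edgeSet.ncard ≤ r * E.card := hcard E (le_refl E)
      _ = r * n := by rw [hEcard]
  exact le_trans (Nat.sInf_le ⟨L, hLconn, hBL, rfl⟩) hLedge

/-- if H is a graph on A ⊆ V(T) with d_T(a,b) ≤ r·d_H(a,b) for all
a,b ∈ A, and c is a weight function on V(T) supported on A with restriction c' to A,
then SW_k(T,c) ≤ r·SW_k(H,c'). -/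
theorem weighted_steiner_wiener_contraction {V : Type*} [Fintype V]
    (T : SimpleGraph V) (hT : T.IsTree) (A : Finset V) (H : SimpleGraph ↥A)
    (hH : H.Connected) (r : ℕ)
    (hd : ∀ x y : ↥A, T.dist ↑x ↑y ≤ r * H.dist x y)
    (c : V → ℕ) (hsupp : ∀ v, v ∉ A → c v = 0) (k : ℕ) :
    wswk k T c ≤ r * wswk k H (fun x => c ↑x) := by
  classical
  let e : (Σ x : ↥A, Fin (c ↑x)) ≃ (Σ v : V, Fin (c v)) :=
    { toFun := fun p => ⟨↑p.1, p.2⟩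
      invFun := fun p => ⟨⟨p.1, by
          by_contra hmem
          have h0 := hsupp p.1 hmem
          exact absurd p.2.2 (by omega)⟩, p.2⟩
      left_inv := fun p => rfl
      right_inv := fun p => rfl }
  have hrw : wswk k T c = ∑ S ∈ Finset.powersetCard k (Finset.univ : Finset (Σ x : ↥A, Fin (c ↑x))),
      steinerDist T ((S.image Sigma.fst).image Subtype.val) := by
    unfold wswk
    refine Finset.sum_nbij' (fun S => S.map e.symm.toEmbedding)
      (fun S => S.map e.toEmbedding) ?_ ?_ ?_ ?_ ?_
    · intro S hS
      rw [Finset.mem_powersetCard_univ] at hS ⊢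
      rw [Finset.card_map]; exact hS
    · intro S hS
      rw [Finset.mem_powersetCard_univ] at hS ⊢
      rw [Finset.card_map]; exact hS
    · intro S hS
      show Finset.map e.toEmbedding (Finset.map e.symm.toEmbedding S) = S
      rw [Finset.map_map]
      have h : e.symm.toEmbedding.trans e.toEmbedding = Function.Embedding.refl _ := by
        apply Function.Embedding.ext; intro p; simp
      rw [h, Finset.map_refl]
    · intro S hS
      show Finset.map e.symm.toEmbedding (Finset.map e.toEmbedding S) = S
      rw [Finset.map_map]
      have h : e.toEmbedding.trans e.symm.toEmbedding = Function.Embedding.refl _ := by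
        apply Function.Embedding.ext; intro p; simp
      rw [h, Finset.map_refl]
    · intro S hS
      show steinerDist T (S.image Sigma.fst)
        = steinerDist T (((Finset.map e.symm.toEmbedding S).image Sigma.fst).image Subtype.val)
      congr 1
      rw [Finset.map_eq_image, Finset.image_image, Finset.image_image]
      exact Finset.image_congr (fun x _ => rfl)
  rw [hrw]
  calc (∑ S ∈ Finset.powersetCard k (Finset.univ : Finset (Σ x : ↥A, Fin (c ↑x))),
        steinerDist T ((S.image Sigma.fst).image Subtype.val))
      ≤ ∑ S ∈ Finset.powersetCard k (Finset.univ : Finset (Σ x : ↥A, Fin (c ↑x))),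
        r * steinerDist H (S.image Sigma.fst) :=
      Finset.sum_le_sum (fun S _ =>
        steiner_key T hT.isConnected A H hH r hd (S.image Sigma.fst))
    _ = r * wswk k H (fun x => c ↑x) := by
        unfold wswk
        rw [Finset.mul_sum]
        apply Finset.sum_congr rfl
        intro S hS
        congr!
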